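/- For p = 3 and t = (3^i + 3^j)/2 with i > j ≥ 0 and i ≢ j (mod 2), the identity (x+1)^t - x^t = -D_s(x-1, 1) holds over F_3, where s = (3^i - 3^j)/2. -/

import Mathlib

open Polynomial

/-- Key field computation: if `u + u⁻¹ + 1 = a` in a field of characteristic 3, then
`(a+1)^t - a^t = -(u^s + u⁻¹^s)` where `t = (3^i+3^j)/2`, `s = (3^i-3^j)/2`. -/
theorem stmt_13_key {K : Type*} [Field K] [CharP K 3] (u : K) (hu : u ≠ 0)
    (i j : ℕ) (hij : j ≤ i) :
    (u + u⁻¹ + 1 + 1) ^ ((3 ^ i + 3 ^ j) / 2) - (u + u⁻¹ + 1) ^ ((3 ^ i + 3 ^ j) / 2)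
      = -(u ^ ((3 ^ i - 3 ^ j) / 2) + u⁻¹ ^ ((3 ^ i - 3 ^ j) / 2)) := by
  haveI : Fact (Nat.Prime 3) := ⟨by norm_num⟩
  have h3 : (3 : K) = 0 := CharP.cast_eq_zero K 3
  set t := (3 ^ i + 3 ^ j) / 2 with ht
  set s := (3 ^ i - 3 ^ j) / 2 with hs
  have hBA : 3 ^ j ≤ 3 ^ i := Nat.pow_le_pow_right (by norm_num) hij
  have h2t : 2 * t = 3 ^ i + 3 ^ j := by
    rw [ht, Nat.mul_div_cancel']
    exact (Odd.add_odd (Odd.pow ⟨1, rfl⟩) (Odd.pow ⟨1, rfl⟩)).two_dvd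
  have h2s : 2 * s = 3 ^ i - 3 ^ j := by
    rw [hs, Nat.mul_div_cancel']
    exact (Nat.Odd.sub_odd (Odd.pow ⟨1, rfl⟩) (Odd.pow ⟨1, rfl⟩)).two_dvd
  have htA : t + s = 3 ^ i := by omega
  have htB : t = 3 ^ j + s := by omega
  -- rewrite `a + 1` and `a` as squares over `u`
  have e1 : u + u⁻¹ + 1 + 1 = (u + 1) ^ 2 * u⁻¹ := by
    field_simp
    ring
  have e2 : u + u⁻¹ + 1 = (u - 1) ^ 2 * u⁻¹ := by
    field_simp
    linear_combination u * h3
  rw [e1, e2, mul_pow, mul_pow, ← pow_mul, ← pow_mul, h2t,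
    pow_add, pow_add, add_pow_char_pow, sub_pow_char_pow, add_pow_char_pow, sub_pow_char_pow,
    one_pow, one_pow]
  have hT : u ^ t = u ^ (3 ^ j) * u ^ s := by rw [htB, pow_add]
  have hA : u ^ (3 ^ i) = u ^ (3 ^ j) * u ^ s * u ^ s := by rw [← htA, pow_add, hT]
  have hiT : u⁻¹ ^ t = (u ^ (3 ^ j) * u ^ s)⁻¹ := by rw [← hT, inv_pow]
  have hiS : u⁻¹ ^ s = (u ^ s)⁻¹ := by rw [inv_pow]
  rw [hA, hiT, hiS]
  have hb : u ^ (3 ^ j) ≠ 0 := pow_ne_zero _ hu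
  have hc : u ^ s ≠ 0 := pow_ne_zero _ hu
  field_simp
  linear_combination (u ^ (3 ^ j) * ((u ^ s) ^ 2 + 1)) * h3

/-- For `p = 3` and `t = (3^i + 3^j)/2` with `i > j ≥ 0`, `i ≢ j (mod 2)`, one has
`(x+1)^t - x^t = -D_s(x-1, 1)` over `F_3`, where `s = (3^i - 3^j)/2`. -/
theorem stmt_13 (i j : ℕ) (hij : j < i) (hpar : ¬ i ≡ j [MOD 2]) :
    ((Polynomial.X + 1) ^ ((3 ^ i + 3 ^ j) / 2) - Polynomial.X ^ ((3 ^ i + 3 ^ j) / 2) :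
        Polynomial (ZMod 3))
      = -(Polynomial.dickson 1 1 ((3 ^ i - 3 ^ j) / 2)).comp (Polynomial.X - 1) := by
  set K := AlgebraicClosure (ZMod 3)
  have hinj : Function.Injective (Polynomial.map (algebraMap (ZMod 3) K)) :=
    Polynomial.map_injective _ (algebraMap (ZMod 3) K).injective
  apply hinj
  apply Polynomial.funext
  intro a
  -- find u with u + u⁻¹ + 1 = a
  obtain ⟨u, hroot⟩ := IsAlgClosed.exists_root
    (X ^ 2 - C (a - 1) * X + 1 : K[X]) (by
      have : (X ^ 2 - C (a - 1) * X + 1 : K[X]).degree = 2 := by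
        compute_degree!
      rw [this]; norm_num)
  rw [Polynomial.IsRoot.def] at hroot
  simp only [eval_add, eval_sub, eval_mul, eval_pow, eval_C, eval_X, eval_one] at hroot
  have hu : u ≠ 0 := by
    rintro rfl
    simp at hroot
  have ha : a = u + u⁻¹ + 1 := by
    linear_combination -u⁻¹ * hroot + (u + 1 - a) * mul_inv_cancel₀ hu
  have hmap1 : Polynomial.map (algebraMap (ZMod 3) K)
      ((Polynomial.X + 1) ^ ((3 ^ i + 3 ^ j) / 2) - Polynomial.X ^ ((3 ^ i + 3 ^ j) / 2))
      = (X + 1) ^ ((3 ^ i + 3 ^ j) / 2) - X ^ ((3 ^ i + 3 ^ j) / 2) := by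
    simp
  have hmap2 : Polynomial.map (algebraMap (ZMod 3) K)
      (-(Polynomial.dickson 1 1 ((3 ^ i - 3 ^ j) / 2)).comp (Polynomial.X - 1))
      = -(Polynomial.dickson 1 1 ((3 ^ i - 3 ^ j) / 2)).comp (X - 1 : K[X]) := by
    rw [Polynomial.map_neg, Polynomial.map_comp, Polynomial.map_dickson]
    simp
  rw [hmap1, hmap2]
  simp only [eval_sub, eval_add, eval_pow, eval_X, eval_one, eval_neg, eval_comp]
  rw [ha, add_sub_cancel_right,
    Polynomial.dickson_one_one_eval_add_inv u u⁻¹ (mul_inv_cancel₀ hu)]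
  exact stmt_13_key u hu i j hij.le
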